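/- Let N and t be positive integers with t ≤ N, and let m ∈ ℝ^N have nonnegative entries arranged in nondecreasing order (m[1] ≤ m[2] ≤ ⋯ ≤ m[N]). Let t' = Σ_{n=1}^{N} m[n] and let N' be the number of indices n with m[n] > 0. Suppose t·m[n] ≤ t' for all n, and N' ≥ t+1. Then min(t'/t − m[N−t+1], m[N−N'+1]) > 0; that is, each iteration of the placement algorithm fills a strictly positive amount of storage. -/
import Mathlib


theorem stmt_12 (N t : ℕ) (ht : 0 < t) (htN : t ≤ N)
    (m : Fin N → ℝ) (hm : ∀ n, 0 ≤ m n) (hmono : Monotone m)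
    (t' : ℝ) (ht' : t' = ∑ n, m n)
    (N' : ℕ) (hN' : N' = (Finset.univ.filter (fun n => 0 < m n)).card)
    (hcond : ∀ n, (t : ℝ) * m n ≤ t')
    (hN'big : t + 1 ≤ N') :
    0 < min (t' / t - m ⟨N - t, by omega⟩) (m ⟨N - N', by omega⟩) := by
  have hN'N : N' ≤ N := by
    rw [hN']
    simpa using Finset.card_filter_le Finset.univ (fun n => 0 < m n)
  have haN : N - N' < N := by omega
  have hbN : N - t < N := by omega
  set a : Fin N := ⟨N - N', haN⟩ with ha
  set b : Fin N := ⟨N - t, hbN⟩ with hb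
  -- Part 2: m a > 0
  have hma : 0 < m a := by
    by_contra h
    push_neg at h
    have hsub : (Finset.univ.filter (fun n => 0 < m n)) ⊆ Finset.Ioi a := by
      intro i hi
      simp only [Finset.mem_filter] at hi
      rw [Finset.mem_Ioi]
      by_contra hia
      push_neg at hia
      have h0 : m i ≤ 0 := le_trans (hmono hia) h
      linarith [hi.2]
    have hcard := Finset.card_le_card hsub
    rw [← hN', Fin.card_Ioi] at hcard
    simp only [ha] at hcard
    omega
  -- Part 1
  have hab : a ∉ Finset.Ici b := by
    simp only [Finset.mem_Ici, Fin.le_def, ha, hb]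
    omega
  have hc : (Finset.Ici b).card = t := by
    rw [Fin.card_Ici]
    simp only [hb]
    omega
  have hsum1 : (t : ℝ) * m b ≤ ∑ i ∈ Finset.Ici b, m i := by
    have := Finset.card_nsmul_le_sum (Finset.Ici b) m (m b)
      (fun i hi => hmono (Finset.mem_Ici.mp hi))
    rw [hc, nsmul_eq_mul] at this
    exact this
  have hsum2 : m a + ∑ i ∈ Finset.Ici b, m i ≤ t' := by
    rw [ht', ← Finset.sum_insert hab]
    exact Finset.sum_le_sum_of_subset_of_nonneg (Finset.subset_univ _)
      (fun i _ _ => hm i)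
  have h1 : (t : ℝ) * m b < t' := by linarith
  have ht0 : (0 : ℝ) < t := by exact_mod_cast ht
  have h2 : 0 < t' / t - m b := by
    rw [sub_pos, lt_div_iff₀ ht0]
    linarith [mul_comm (m b) (t : ℝ)]
  exact lt_min h2 hma
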